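/- Let d ≥ 2 and suppose (d_{2j})_{j=1}^{m_2} and (d_{3j})_{j=1}^{m_3} are partitions of d with m_2 + m_3 = d, and suppose both partitions contain at least one odd part. Then at least one of the two partitions has smallest part equal to 1. -/

import Mathlib

def IsPartition (d : ℕ) (l : List ℕ) : Prop :=
  l.Pairwise (· ≥ ·) ∧ (∀ x ∈ l, 0 < x) ∧ l.sum = d

lemma aux_two_le_sum (l : List ℕ) (h : ∀ y ∈ l, 2 ≤ y) : 2 * l.length ≤ l.sum := by
  induction l with
  | nil => simp
  | cons a t ih =>
    have := h a (by simp)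
    have := ih (fun y hy => h y (by simp [hy]))
    simp [List.sum_cons, Nat.mul_succ]
    omega

lemma aux_last_le (l : List ℕ) (hs : l.Pairwise (· ≥ ·)) : ∀ x ∈ l, l.getLastD 0 ≤ x := by
  induction l with
  | nil => simp
  | cons a t ih =>
    intro x hx
    rw [List.getLastD_cons]
    rcases List.mem_cons.1 hx with rfl | hxt
    · cases t with
      | nil => simp
      | cons b u =>
        have h1 : (b :: u).getLastD x ≤ b := by
          have := ih hs.of_cons b (by simp)
          simpa [List.getLastD_cons, List.getLast?_eq_getLast (l := b :: u) (by simp)] using this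
        have h2 : b ≤ x := (List.pairwise_cons.1 hs).1 b (by simp)
        exact le_trans h1 h2
    · cases t with
      | nil => simp at hxt
      | cons b u =>
        exact ih hs.of_cons x hxt

lemma aux_len (d : ℕ) (l : List ℕ) (h : IsPartition d l) (hne : l.getLastD 0 ≠ 1)
    (ho : ∃ x ∈ l, Odd x) : 2 * l.length + 1 ≤ d := by
  obtain ⟨hs, hpos, hsum⟩ := h
  obtain ⟨x, hx, hox⟩ := ho
  have hlastpos : 0 < l.getLastD 0 := by
    cases l with
    | nil => simp at hx
    | cons a t =>
      have := hpos _ (List.getLast_mem (l := a :: t) (by simp))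
      rwa [List.getLastD_eq_getLast?, List.getLast?_eq_getLast (l := a::t) (by simp),
        Option.getD_some]
  have hall : ∀ y ∈ l, 2 ≤ y := fun y hy => by
    have := aux_last_le l hs y hy; omega
  have hx3 : 3 ≤ x := by
    have := hall x hx
    rcases hox with ⟨k, hk⟩
    omega
  obtain ⟨s, t, rfl⟩ := List.append_of_mem hx
  have hs1 : 2 * s.length ≤ s.sum := aux_two_le_sum s (fun y hy => hall y (by simp [hy]))
  have ht1 : 2 * t.length ≤ t.sum := aux_two_le_sum t (fun y hy => hall y (by simp [hy]))
  have : (s ++ x :: t).sum = s.sum + x + t.sum := by simp [List.sum_append]; ring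
  have hlen : (s ++ x :: t).length = s.length + t.length + 1 := by simp; omega
  omega

theorem stmt14 (d : ℕ) (hd : 2 ≤ d) (p2 p3 : List ℕ)
    (h2 : IsPartition d p2) (h3 : IsPartition d p3)
    (hlen : p2.length + p3.length = d)
    (ho2 : ∃ x ∈ p2, Odd x) (ho3 : ∃ x ∈ p3, Odd x) :
    p2.getLastD 0 = 1 ∨ p3.getLastD 0 = 1 := by
  by_contra h
  push_neg at h
  have a2 := aux_len d p2 h2 h.1 ho2
  have a3 := aux_len d p3 h3 h.2 ho3
  omega
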